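/- For any finite set of constants C and any arity n, the number of equivalence classes of n-tuples of terms (over constants from C, variables, and nulls) under the position-comparability relation ∼ is finite. -/

import Mathlib

namespace Paper

/-- Terms: constants, variables, labeled nulls. -/
inductive Term (C : Type) where
  | const : C → Term C
  | var   : ℕ → Term C
  | null  : ℕ → Term C
deriving DecidableEq

variable {C : Type}

/-- Relational atoms. -/
structure Atom (C : Type) where
  pred : ℕ
  args : List (Term C)

/-- Substitutions on variables. -/
abbrev Subst (C : Type) := ℕ → Term C

def Term.apply (θ : Subst C) : Term C → Term C
  | .const c => .const c
  | .var v   => θ v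
  | .null n  => .null n

def Atom.apply (θ : Subst C) (a : Atom C) : Atom C :=
  ⟨a.pred, a.args.map (Term.apply θ)⟩

def Term.varsF : Term C → Finset ℕ
  | .var v => {v}
  | _ => ∅

def Term.nullsF : Term C → Finset ℕ
  | .null n => {n}
  | _ => ∅

def Atom.varsF (a : Atom C) : Finset ℕ := a.args.foldr (fun t s => t.varsF ∪ s) ∅
def Atom.nullsF (a : Atom C) : Finset ℕ := a.args.foldr (fun t s => t.nullsF ∪ s) ∅

def atomsVars (l : List (Atom C)) : Finset ℕ := l.foldr (fun a s => a.varsF ∪ s) ∅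
def atomsNulls (l : List (Atom C)) : Finset ℕ := l.foldr (fun a s => a.nullsF ∪ s) ∅

/-- A single-head TGD (existential rule) `body → ∃Z head`, where the
existential variables are exactly the head variables not in the body. -/
structure TGD (C : Type) where
  body : List (Atom C)
  head : Atom C

def TGD.varsF (σ : TGD C) : Finset ℕ := atomsVars (σ.head :: σ.body)
def TGD.nullsF (σ : TGD C) : Finset ℕ := atomsNulls (σ.head :: σ.body)
def TGD.exVars (σ : TGD C) : Finset ℕ := σ.head.varsF \ atomsVars σ.body
def TGD.varsList (σ : TGD C) : List ℕ := σ.varsF.sort (· ≤ ·)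

def TGD.applyS (θ : Subst C) (σ : TGD C) : TGD C :=
  ⟨σ.body.map (Atom.apply θ), σ.head.apply θ⟩

/-- Type comparability of two terms. -/
def TypeComp (t t' : Term C) : Prop :=
  (∀ c, t = Term.const c ↔ t' = Term.const c) ∧
  ((∃ v, t = Term.var v) ↔ (∃ v, t' = Term.var v)) ∧
  ((∃ m, t = Term.null m) ↔ (∃ m, t' = Term.null m))

/-- Position comparability of two lists of terms. -/
def PosComp (l l' : List (Term C)) : Prop :=
  l.length = l'.length ∧
  (∀ i (hi : i < l.length) (hi' : i < l'.length),
      TypeComp (l.get ⟨i, hi⟩) (l'.get ⟨i, hi'⟩)) ∧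
  (∀ i j (hi : i < l.length) (hj : j < l.length) (hi' : i < l'.length) (hj' : j < l'.length),
      l.get ⟨i, hi⟩ = l.get ⟨j, hj⟩ ↔ l'.get ⟨i, hi'⟩ = l'.get ⟨j, hj'⟩) ∧
  (∀ t, t ∈ l → t ∈ l' →
    ∀ i (hi : i < l.length) (hi' : i < l'.length),
      (l.get ⟨i, hi⟩ = t ↔ l'.get ⟨i, hi'⟩ = t))

/-- One element of a derivation path: an atom together with an
instantiated rule `ρ = σθ`, recorded as the rule and the substitution. -/
structure Step (C : Type) where
  atom : Atom C
  rule : TGD C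
  θ : Subst C

def Step.inst (s : Step C) : TGD C := s.rule.applyS s.θ

/-- The nulls introduced at this step by eliminating existential variables. -/
def Step.freshNulls (s : Step C) : Finset ℕ :=
  s.rule.exVars.biUnion (fun v => (s.θ v).nullsF)

/-- Comparability of two derivation-path elements: same rule of `Sg`, and the
tuples of substituted terms are position comparable. -/
def PairComp (s s' : Step C) : Prop :=
  s.rule = s'.rule ∧ PosComp (s.rule.varsList.map s.θ) (s'.rule.varsList.map s'.θ)

/-- Derivation path of `Sg` (Definition 3 of the paper). -/
def IsDerivationPath (Sg : Set (TGD C)) (P : List (Step C)) : Prop :=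
  (∀ s ∈ P, s.rule ∈ Sg ∧ s.atom = s.rule.head.apply s.θ) ∧
  (∀ i (hi : i + 1 < P.length),
      (P.get ⟨i+1, hi⟩).atom ∈ (P.get ⟨i, Nat.lt_of_succ_lt hi⟩).inst.body) ∧
  (∀ i j (hi : i < P.length) (hj : j < P.length), i < j →
      ∀ m ∈ (P.get ⟨i, hi⟩).freshNulls, m ∉ (P.get ⟨j, hj⟩).inst.nullsF)

/-- Comparability of derivation paths. -/
def PathComp (P Q : List (Step C)) : Prop :=
  P.length = Q.length ∧
  ∀ i (hi : i < P.length) (hi' : i < Q.length), PairComp (P.get ⟨i, hi⟩) (Q.get ⟨i, hi'⟩)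

/-- Loop pattern: first and last elements comparable, no other pair comparable. -/
def IsLoopPattern (Sg : Set (TGD C)) (P : List (Step C)) : Prop :=
  IsDerivationPath Sg P ∧ 2 ≤ P.length ∧
  (∀ (h0 : 0 < P.length) (hl : P.length - 1 < P.length),
      PairComp (P.get ⟨0, h0⟩) (P.get ⟨P.length - 1, hl⟩)) ∧
  (∀ i j (hi : i < P.length) (hj : j < P.length), i < j → ¬(i = 0 ∧ j = P.length - 1) →
      ¬ PairComp (P.get ⟨i, hi⟩) (P.get ⟨j, hj⟩))

/-- The intersection `⋂_j var(α_j)` of head-atom variables along a path. -/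
def interVars (P : List (Step C)) : Set ℕ := {v | ∀ s ∈ P, v ∈ s.atom.varsF}

/-- The loop-restricted splitting condition of Definition 8. -/
def LRcond (P : List (Step C)) : Prop :=
  ∀ i (hi : i + 1 < P.length),
    ∃ Bh Bb : List (Atom C),
      (∀ a, a ∈ (P.get ⟨i, Nat.lt_of_succ_lt hi⟩).inst.body ↔ (a ∈ Bh ∨ a ∈ Bb)) ∧
      (∀ a, ¬(a ∈ Bh ∧ a ∈ Bb)) ∧
      (P.get ⟨i+1, hi⟩).atom ∈ Bb ∧
      ((((P.get ⟨i, Nat.lt_of_succ_lt hi⟩).atom.varsF ∪ atomsVars Bh) ∩ atomsVars Bb : Finset ℕ) : Set ℕ)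
        = interVars P

/-- Loop restricted (LR) sets of TGDs. -/
def LoopRestricted (Sg : Set (TGD C)) : Prop :=
  ∀ P, IsLoopPattern Sg P → LRcond P

/-- Homomorphisms: identity on constants, nulls map to constants or nulls. -/
def IsHom (h : Term C → Term C) : Prop :=
  (∀ c, h (Term.const c) = Term.const c) ∧
  (∀ m, (∃ c, h (Term.null m) = Term.const c) ∨ (∃ m', h (Term.null m) = Term.null m'))

def Atom.mapTerms (h : Term C → Term C) (a : Atom C) : Atom C := ⟨a.pred, a.args.map h⟩

def IsDatabase (D : Set (Atom C)) : Prop :=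
  D.Finite ∧ ∀ a ∈ D, ∀ t ∈ a.args, ∃ c, t = Term.const c

/-- A Boolean conjunctive query (all variables existentially quantified). -/
structure BCQ (C : Type) where
  atoms : List (Atom C)

def SatBCQ (I : Set (Atom C)) (q : BCQ C) : Prop :=
  ∃ h, IsHom h ∧ ∀ a ∈ q.atoms, a.mapTerms h ∈ I

def SatTGD (I : Set (Atom C)) (σ : TGD C) : Prop :=
  ∀ h, IsHom h → (∀ a ∈ σ.body, a.mapTerms h ∈ I) →
    ∃ h', IsHom h' ∧ (∀ v ∈ atomsVars σ.body, h' (Term.var v) = h (Term.var v)) ∧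
      σ.head.mapTerms h' ∈ I

/-- Certain-answer entailment `D ∪ Sg ⊨ q`. -/
def Entails (D : Set (Atom C)) (Sg : Set (TGD C)) (q : BCQ C) : Prop :=
  ∀ I : Set (Atom C), D ⊆ I → (∀ σ ∈ Sg, SatTGD I σ) → SatBCQ I q

/-- Chase sequences of a given length (oblivious chase). -/
inductive ChaseSeq (D : Set (Atom C)) (Sg : Set (TGD C)) : ℕ → Set (Atom C) → Prop where
  | zero : ChaseSeq D Sg 0 D
  | succ {n : ℕ} {I : Set (Atom C)} (σ : TGD C) (θ : Subst C) :
      ChaseSeq D Sg n I → σ ∈ Sg →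
      (∀ a ∈ σ.body, a.apply θ ∈ I) →
      (∀ v ∈ σ.exVars, ∃ m, θ v = Term.null m ∧ ∀ a ∈ I, Term.null m ∉ a.args) →
      ChaseSeq D Sg (n+1) (insert (σ.head.apply θ) I)

/-- Atoms of chase level at most `k` (the level-based chase `chase^k`). -/
inductive ChaseLevel (D : Set (Atom C)) (Sg : Set (TGD C)) : ℕ → Atom C → Prop where
  | base {a : Atom C} : a ∈ D → ChaseLevel D Sg 0 a
  | mono {k : ℕ} {a : Atom C} : ChaseLevel D Sg k a → ChaseLevel D Sg (k+1) a
  | step {k : ℕ} (σ : TGD C) (θ : Subst C) : σ ∈ Sg →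
      (∀ a ∈ σ.body, ChaseLevel D Sg k (a.apply θ)) →
      ChaseLevel D Sg (k+1) (σ.head.apply θ)

def ChaseLevelEntails (D : Set (Atom C)) (Sg : Set (TGD C)) (k : ℕ) (q : BCQ C) : Prop :=
  ∃ h, IsHom h ∧ ∀ a ∈ q.atoms, ChaseLevel D Sg k (a.mapTerms h)

def Derivable (D : Set (Atom C)) (Sg : Set (TGD C)) (a : Atom C) : Prop :=
  ∃ N I, ChaseSeq D Sg N I ∧ a ∈ I

/-- Bounded derivation-depth property of a class of TGD sets. -/
def BDDP (Cl : Set (Set (TGD C))) : Prop :=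
  ∀ Sg ∈ Cl, ∀ q : BCQ C, ∃ k, ∀ D : Set (Atom C),
    IsDatabase D → Entails D Sg q → ChaseLevelEntails D Sg k q

def BDDPof (Sg : Set (TGD C)) : Prop :=
  ∀ q : BCQ C, ∃ k, ∀ D : Set (Atom C),
    IsDatabase D → Entails D Sg q → ChaseLevelEntails D Sg k q

/-- (Instantiated or symbolic) derivation trees. -/
inductive ITree (C : Type) where
  | leaf : Atom C → ITree C
  | node : Atom C → TGD C → Subst C → List (ITree C) → ITree C

def ITree.rootAtom : ITree C → Atom C
  | .leaf a => a
  | .node a _ _ _ => a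

def ITree.label : ITree C → (Atom C ⊕ (Atom C × TGD C × Subst C))
  | .leaf a => .inl a
  | .node a σ θ _ => .inr (a, σ, θ)

def ITree.depth : ITree C → ℕ
  | .leaf _ => 1
  | .node _ _ _ cs => 1 + (cs.attach.map (fun t => ITree.depth t.1)).foldr max 0
decreasing_by simp_wf; have := List.sizeOf_lt_of_mem t.2; omega

def ITree.numNodes : ITree C → ℕ
  | .leaf _ => 1
  | .node _ _ _ cs => 1 + (cs.attach.map (fun t => ITree.numNodes t.1)).sum
decreasing_by simp_wf; have := List.sizeOf_lt_of_mem t.2; omega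

def ITree.numLeaves : ITree C → ℕ
  | .leaf _ => 1
  | .node _ _ _ cs => (cs.attach.map (fun t => ITree.numLeaves t.1)).sum
decreasing_by simp_wf; have := List.sizeOf_lt_of_mem t.2; omega

def ITree.subtrees : ITree C → List (ITree C)
  | .leaf a => [.leaf a]
  | .node a σ θ cs => .node a σ θ cs :: (cs.attach.map (fun t => ITree.subtrees t.1)).flatten
decreasing_by simp_wf; have := List.sizeOf_lt_of_mem t.2; omega

/-- Instantiated derivation trees on a database `D` (Definition 7). -/
inductive IsInstTree (D : Set (Atom C)) (Sg : Set (TGD C)) : ITree C → Prop where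
  | leaf {a : Atom C} : a ∈ D → IsInstTree D Sg (.leaf a)
  | node {a : Atom C} {σ : TGD C} {θ : Subst C} {cs : List (ITree C)} :
      σ ∈ Sg → a = σ.head.apply θ →
      List.Forall₂ (fun (b : Atom C) (t : ITree C) => t.rootAtom = b.apply θ) σ.body cs →
      (∀ t ∈ cs, IsInstTree D Sg t) →
      a.varsF = ∅ →
      IsInstTree D Sg (.node a σ θ cs)

/-- Symbolic derivation trees of `Sg` (Definition 6). -/
inductive IsDerivTree (Sg : Set (TGD C)) : ITree C → Prop where
  | leafnode {a : Atom C} {σ : TGD C} {θ : Subst C} :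
      σ ∈ Sg → a = σ.head.apply θ →
      (∀ b ∈ σ.body, (Atom.apply θ b).nullsF = ∅) →
      IsDerivTree Sg (.node a σ θ [])
  | node {a : Atom C} {σ : TGD C} {θ : Subst C} {cs : List (ITree C)} :
      σ ∈ Sg → a = σ.head.apply θ → cs ≠ [] →
      List.Forall₂ (fun (b : Atom C) (t : ITree C) => t.rootAtom = b.apply θ) σ.body cs →
      (∀ t ∈ cs, IsDerivTree Sg t) →
      IsDerivTree Sg (.node a σ θ cs)

/-- A tree supports an atom if the root atom is a homomorphic image of it. -/
def Supports (T : ITree C) (a : Atom C) : Prop :=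
  ∃ h, IsHom h ∧ a.mapTerms h = T.rootAtom

def compSubst (τ : Term C → Term C) (θ : Subst C) : Subst C := fun v => τ (θ v)

/-- `InstOf T T'`: `T'` is obtained from the symbolic tree `T` by applying
further substitutions nodewise and expanding symbolic leaves by database-atom
leaves (Definition 7). -/
inductive InstOf : ITree C → ITree C → Prop where
  | leafExpand {a : Atom C} {σ : TGD C} {θ : Subst C} (τ : Term C → Term C) :
      InstOf (.node a σ θ [])
        (.node (σ.head.apply (compSubst τ θ)) σ (compSubst τ θ)
          (σ.body.map (fun b => ITree.leaf (b.apply (compSubst τ θ)))))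
  | node {a : Atom C} {σ : TGD C} {θ : Subst C} {cs cs' : List (ITree C)}
      (τ : Term C → Term C) : cs ≠ [] →
      List.Forall₂ InstOf cs cs' →
      InstOf (.node a σ θ cs) (.node (σ.head.apply (compSubst τ θ)) σ (compSubst τ θ) cs')

def AtomicEntails (D : Set (Atom C)) (Sg : Set (TGD C)) (p : ℕ) (z : List ℕ) : Prop :=
  Entails D Sg ⟨[⟨p, z.map Term.var⟩]⟩

/-- BDTDP with a concrete tree-depth bound `k`. -/
def BDTDPbound (Sg : Set (TGD C)) (k : ℕ) : Prop :=
  ∀ (p : ℕ) (z : List ℕ) (D : Set (Atom C)), IsDatabase D →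
    (AtomicEntails D Sg p z ↔
      ∃ (T : ITree C) (n : List (Term C)),
        IsInstTree D Sg T ∧ T.depth ≤ k ∧ Supports T ⟨p, n⟩ ∧
        ∃ h, IsHom h ∧ (z.map Term.var).map h = n)

def BDTDPof (Sg : Set (TGD C)) : Prop := ∃ k, BDTDPbound Sg k

/-- Bounded derivation tree depth property of a class of TGD sets. -/
def BDTDP (Cl : Set (Set (TGD C))) : Prop := ∀ Sg ∈ Cl, BDTDPof Sg

/-- The five loop pattern types of generalised loop restriction. -/
def TypeI (P : List (Step C)) : Prop := LRcond P

def TypeII (P : List (Step C)) : Prop :=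
  ∃ (i : ℕ) (hi : i + 1 < P.length),
    ∃ Bh Bb : List (Atom C),
      (∀ a, a ∈ (P.get ⟨i, Nat.lt_of_succ_lt hi⟩).inst.body ↔ (a ∈ Bh ∨ a ∈ Bb)) ∧
      (∀ a, ¬(a ∈ Bh ∧ a ∈ Bb)) ∧
      (P.get ⟨i+1, hi⟩).atom ∈ Bb ∧
      ((P.get ⟨i, Nat.lt_of_succ_lt hi⟩).atom.varsF ∪ atomsVars Bh) ∩ atomsVars Bb = ∅

def TypeIII (P : List (Step C)) : Prop :=
  ∀ i (hi : i + 1 < P.length), ∀ β ∈ (P.get ⟨i, Nat.lt_of_succ_lt hi⟩).inst.body,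
    (P.get ⟨i, Nat.lt_of_succ_lt hi⟩).inst.varsF ⊆ β.varsF

def TypeIV (P : List (Step C)) : Prop :=
  ∀ i (hi : i + 1 < P.length), ∀ β ∈ (P.get ⟨i, Nat.lt_of_succ_lt hi⟩).inst.body,
    β ≠ (P.get ⟨i+1, hi⟩).atom →
    ((P.get ⟨i+1, hi⟩).atom.varsF ∩ β.varsF).Nonempty →
    ∀ v ∈ (P.get ⟨i+1, hi⟩).atom.varsF ∩ β.varsF,
      ∀ j (hj : j < P.length), j ≤ i → v ∈ (P.get ⟨j, hj⟩).atom.varsF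

def TypeV (P : List (Step C)) : Prop :=
  ∃ (i : ℕ) (hi : i + 1 < P.length),
    ∃ Bh Bb : List (Atom C),
      (∀ a, a ∈ (P.get ⟨i, Nat.lt_of_succ_lt hi⟩).inst.body ↔ (a ∈ Bh ∨ a ∈ Bb)) ∧
      (∀ a, ¬(a ∈ Bh ∧ a ∈ Bb)) ∧
      (∀ j (hj : j < P.length), i + 1 ≤ j → (P.get ⟨j, hj⟩).atom ∉ Bh) ∧
      atomsNulls Bh ≠ ∅

/-- Generalised loop restricted (GLR) sets of TGDs. -/
def GLR (Sg : Set (TGD C)) : Prop :=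
  ∀ P, IsLoopPattern Sg P → TypeI P ∨ TypeII P ∨ TypeIII P ∨ TypeIV P ∨ TypeV P

/-- `N` bounds ∼-distinct derivation paths of `Sg`. -/
def PathBound (Sg : Set (TGD C)) (N : ℕ) : Prop :=
  ∀ P : List (Step C), IsDerivationPath Sg P → N < P.length →
    ∃ (i j : ℕ) (hi : i < P.length) (hj : j < P.length), i < j ∧
      PairComp (P.get ⟨i, hi⟩) (P.get ⟨j, hj⟩)


/-- Position comparability of two `n`-tuples of terms. -/
def PosCompF {n : ℕ} (t t' : Fin n → Term C) : Prop :=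
  (∀ i, TypeComp (t i) (t' i)) ∧
  (∀ i j, t i = t j ↔ t' i = t' j) ∧
  (∀ s : Term C, (∃ i, t i = s) → (∃ j, t' j = s) → ∀ i, (t i = s ↔ t' i = s))

/-- For any finite set of constants and any arity `n`, there are only finitely many
equivalence classes of `n`-tuples of terms under position comparability `∼`:
some finite set of tuples meets every `∼`-class. -/
theorem posComp_finitely_many_classes (C : Type) [Fintype C] [DecidableEq C] (n : ℕ) :
    ∃ S : Finset (Fin n → Term C), ∀ t : Fin n → Term C, ∃ s ∈ S, PosCompF t s := by
  classical
  refine ⟨Fintype.piFinset (fun _ =>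
    (Finset.univ.image Term.const) ∪ ((Finset.range (2*n)).image Term.var)
      ∪ ((Finset.range (2*n)).image (Term.null (C := C)))), ?_⟩
  intro t
  -- counting: at most n names of each kind are used by t
  have hcount : ∀ f : ℕ → Term C, Function.Injective f →
      n ≤ ((Finset.range (2*n)).filter (fun k => ∀ i, t i ≠ f k)).card := by
    intro f hf
    have h1 : ((Finset.range (2*n)).filter (fun k => ∃ i, t i = f k)).card ≤ n := by
      have := Finset.card_le_card_of_injOn
        (f := fun k => if h : ∃ i, t i = f k then (h.choose : Fin n).val else 0)
        (s := (Finset.range (2*n)).filter (fun k => ∃ i, t i = f k))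
        (t := Finset.range n) ?_ ?_
      · simpa using this
      · intro k hk
        rw [Finset.mem_coe, Finset.mem_filter] at hk
        simp only [dif_pos hk.2]
        exact Finset.mem_range.mpr (hk.2.choose).isLt
      · intro k1 h1 k2 h2 he
        rw [Finset.mem_coe, Finset.mem_filter] at h1 h2
        simp only [dif_pos h1.2, dif_pos h2.2] at he
        have e1 := h1.2.choose_spec
        have e2 := h2.2.choose_spec
        have : (h1.2.choose : Fin n) = h2.2.choose := Fin.val_injective he
        rw [this] at e1
        exact hf (e1 ▸ e2)
    have h2 := Finset.card_filter_add_card_filter_not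
      (s := Finset.range (2*n)) (p := fun k => ∃ i, t i = f k)
    simp only [Finset.card_range] at h2
    have h3 : ((Finset.range (2*n)).filter (fun k => ¬ ∃ i, t i = f k)).card
        = ((Finset.range (2*n)).filter (fun k => ∀ i, t i ≠ f k)).card := by
      congr 1
      apply Finset.filter_congr
      intro k _
      push_neg
      rfl
    omega
  have hcV := hcount Term.var (fun a b h => by cases h; rfl)
  have hcN := hcount (Term.null (C := C)) (fun a b h => by cases h; rfl)
  set FV := ((Finset.range (2*n)).filter (fun k => ∀ i, t i ≠ Term.var k)) with hFV
  set FN := ((Finset.range (2*n)).filter (fun k => ∀ i, t i ≠ Term.null (C := C) k)) with hFN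
  set gV : Fin n ↪o ℕ := FV.orderEmbOfCardLe hcV with hgV
  set gN : Fin n ↪o ℕ := FN.orderEmbOfCardLe hcN with hgN
  have hgVmem : ∀ a, gV a ∈ FV := fun a => FV.orderEmbOfCardLe_mem hcV a
  have hgNmem : ∀ a, gN a ∈ FN := fun a => FN.orderEmbOfCardLe_mem hcN a
  have hgVfresh : ∀ a i, t i ≠ Term.var (gV a) := by
    intro a i
    have := hgVmem a
    rw [hFV, Finset.mem_filter] at this
    exact this.2 i
  have hgNfresh : ∀ a i, t i ≠ Term.null (gN a) := by
    intro a i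
    have := hgNmem a
    rw [hFN, Finset.mem_filter] at this
    exact this.2 i
  have hgVlt : ∀ a, gV a ∈ Finset.range (2*n) := by
    intro a; have := hgVmem a; rw [hFV, Finset.mem_filter] at this; exact this.1
  have hgNlt : ∀ a, gN a ∈ Finset.range (2*n) := by
    intro a; have := hgNmem a; rw [hFN, Finset.mem_filter] at this; exact this.1
  -- first occurrence of the value t i
  have hne : ∀ i : Fin n, (Finset.univ.filter (fun j => t j = t i)).Nonempty :=
    fun i => ⟨i, by simp⟩
  set fst : Fin n → Fin n := fun i => (Finset.univ.filter (fun j => t j = t i)).min' (hne i)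
    with hfstdef
  have hfst_val : ∀ i, t (fst i) = t i := by
    intro i
    have := (Finset.univ.filter (fun j => t j = t i)).min'_mem (hne i)
    rw [Finset.mem_filter] at this
    exact this.2
  have hfst_iff : ∀ i j, fst i = fst j ↔ t i = t j := by
    intro i j
    constructor
    · intro h
      have h1 := hfst_val i
      have h2 := hfst_val j
      rw [h] at h1
      rw [← h1, h2]
    · intro h
      simp only [hfstdef, h]
  -- the canonical representative
  set s : Fin n → Term C := fun i =>
    Term.casesOn (t i) (fun c => Term.const c) (fun _ => Term.var (gV (fst i)))
      (fun _ => Term.null (gN (fst i))) with hsdef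
  have hs_const : ∀ i c, t i = Term.const c → s i = Term.const c := by
    intro i c h; simp only [hsdef, h]
  have hs_var : ∀ i v, t i = Term.var v → s i = Term.var (gV (fst i)) := by
    intro i v h; simp only [hsdef, h]
  have hs_null : ∀ i m, t i = Term.null m → s i = Term.null (gN (fst i)) := by
    intro i m h; simp only [hsdef, h]
  refine ⟨s, ?_, ?_, ?_, ?_⟩
  · -- membership
    rw [Fintype.mem_piFinset]
    intro i
    rcases ht : t i with c | v | m
    · rw [hs_const i c ht]
      simp
    · rw [hs_var i v ht]
      simp only [Finset.mem_union]
      exact Or.inl (Or.inr (Finset.mem_image.mpr ⟨_, hgVlt (fst i), rfl⟩))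
    · rw [hs_null i m ht]
      simp only [Finset.mem_union]
      exact Or.inr (Finset.mem_image.mpr ⟨_, hgNlt (fst i), rfl⟩)
  · -- type comparability
    intro i
    rcases ht : t i with c | v | m
    · rw [hs_const i c ht]
      exact ⟨fun c' => Iff.rfl, Iff.rfl, Iff.rfl⟩
    · rw [hs_var i v ht]
      refine ⟨fun c' => by simp, by simp, by simp⟩
    · rw [hs_null i m ht]
      refine ⟨fun c' => by simp, by simp, by simp⟩
  · -- equality pattern
    intro i j
    rcases ht : t i with c | v | m <;> rcases ht' : t j with c' | v' | m'
    · rw [hs_const i c ht, hs_const j c' ht']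
    · rw [hs_const i c ht, hs_var j v' ht']; simp
    · rw [hs_const i c ht, hs_null j m' ht']; simp
    · rw [hs_var i v ht, hs_const j c' ht']; simp
    · rw [hs_var i v ht, hs_var j v' ht']
      have : t i = t j ↔ gV (fst i) = gV (fst j) := by
        rw [gV.injective.eq_iff, hfst_iff]
      rw [ht, ht'] at this
      simpa using this
    · rw [hs_var i v ht, hs_null j m' ht']; simp
    · rw [hs_null i m ht, hs_const j c' ht']; simp
    · rw [hs_null i m ht, hs_var j v' ht']; simp
    · rw [hs_null i m ht, hs_null j m' ht']
      have : t i = t j ↔ gN (fst i) = gN (fst j) := by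
        rw [gN.injective.eq_iff, hfst_iff]
      rw [ht, ht'] at this
      simpa using this
  · -- common terms
    rintro u ⟨i0, hi0⟩ ⟨j0, hj0⟩ i
    rcases ht0 : t j0 with c | v | m
    · -- u is a constant
      rw [hs_const j0 c ht0] at hj0
      subst hj0
      rcases ht : t i with c' | v' | m'
      · rw [hs_const i c' ht]
      · rw [hs_var i v' ht]; simp
      · rw [hs_null i m' ht]; simp
    · -- u would be a fresh var name: contradiction with t i0 = u
      rw [hs_var j0 v ht0] at hj0
      exact absurd (hj0 ▸ hi0) (hgVfresh (fst j0) i0)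
    · rw [hs_null j0 m ht0] at hj0
      exact absurd (hj0 ▸ hi0) (hgNfresh (fst j0) i0)

end Paper
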